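/- Let Σ be a k×k real positive definite matrix. Then the CDF Φ_Σ : ℝ^k → ℝ is differentiable, and for every y ∈ ℝ^k the first truncated moment satisfies ∫_{∏_{i=1}^k (−∞, y_i]} x φ_Σ(x) dx = −Σ · ∇Φ_Σ(y), where ∇Φ_Σ(y) ∈ ℝ^k is the gradient of Φ_Σ at y. Equivalently, if T is distributed as N(0,Σ) truncated to ∏(−∞,y_i] with α = Φ_Σ(y) > 0, then E(T) = −α^{−1} Σ ∇Φ_Σ(y). -/

import Mathlib

open Matrix MeasureTheory

/-- Density of the multivariate normal distribution `N(μ, S)`. -/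
noncomputable def mvnPdf {ι : Type} [Fintype ι] [DecidableEq ι]
    (μ : ι → ℝ) (S : Matrix ι ι ℝ) (x : ι → ℝ) : ℝ :=
  (2 * Real.pi) ^ (-(Fintype.card ι : ℝ) / 2) * S.det ^ (-(1 : ℝ) / 2) *
    Real.exp (-(1 / 2) * ((x - μ) ⬝ᵥ (S⁻¹ *ᵥ (x - μ))))

/-- CDF of the multivariate normal distribution. -/
noncomputable def mvnCdf {ι : Type} [Fintype ι] [DecidableEq ι]
    (μ : ι → ℝ) (S : Matrix ι ι ℝ) (y : ι → ℝ) : ℝ :=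
  ∫ x in Set.Iic y, mvnPdf μ S x

section Aux

open Metric Set Real

variable {k : ℕ}

/-- The continuous linear map `v ↦ w ⬝ᵥ v`. -/
noncomputable def dotCLM (w : Fin k → ℝ) : (Fin k → ℝ) →L[ℝ] ℝ :=
  ∑ i, w i • (ContinuousLinearMap.proj i : ((Fin k → ℝ)) →L[ℝ] ℝ)

lemma dotCLM_apply (w v : Fin k → ℝ) : dotCLM w v = w ⬝ᵥ v := by
  simp [dotCLM, dotProduct, ContinuousLinearMap.sum_apply]

lemma norm_dotCLM_le (w : Fin k → ℝ) : ‖dotCLM w‖ ≤ ∑ i, |w i| := by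
  refine ContinuousLinearMap.opNorm_le_bound _ (by positivity) fun v => ?_
  rw [dotCLM_apply]
  calc ‖w ⬝ᵥ v‖ = |∑ i, w i * v i| := rfl
    _ ≤ ∑ i, |w i * v i| := Finset.abs_sum_le_sum_abs _ _
    _ ≤ ∑ i, |w i| * ‖v‖ := by
        refine Finset.sum_le_sum fun i _ => ?_
        rw [abs_mul]
        exact mul_le_mul_of_nonneg_left (norm_le_pi_norm v i) (abs_nonneg _)
    _ = (∑ i, |w i|) * ‖v‖ := by rw [Finset.sum_mul]

lemma continuous_dotCLM : Continuous fun w : Fin k → ℝ => dotCLM w := by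
  refine continuous_finset_sum _ fun i _ => ?_
  exact (continuous_apply i).smul continuous_const

lemma sq_pi_norm_le (x : Fin k → ℝ) : ‖x‖ ^ 2 ≤ ∑ i, (x i) ^ 2 := by
  have h : ‖x‖ ≤ Real.sqrt (∑ i, (x i) ^ 2) := by
    refine (pi_norm_le_iff_of_nonneg (Real.sqrt_nonneg _)).2 fun i => ?_
    rw [Real.norm_eq_abs, ← Real.sqrt_sq_eq_abs]
    exact Real.sqrt_le_sqrt (Finset.single_le_sum (f := fun i => (x i)^2)
      (fun j _ => sq_nonneg _) (Finset.mem_univ i))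
  calc ‖x‖ ^ 2 ≤ Real.sqrt (∑ i, (x i) ^ 2) ^ 2 :=
        pow_le_pow_left₀ (norm_nonneg _) h 2
    _ = ∑ i, (x i) ^ 2 := Real.sq_sqrt (by positivity)

/-- Master integrability lemma. -/
lemma integrable_aux (a b : ℝ) (ha : 0 < a) :
    Integrable (fun u : Fin k → ℝ => (‖u‖ + 1) * Real.exp (b * ‖u‖ - a * ‖u‖ ^ 2)) := by
  set C₀ : ℝ := Real.exp ((|b| + 1) ^ 2 / (2 * a)) with hC₀
  have key : ∀ u : Fin k → ℝ, (‖u‖ + 1) * Real.exp (b * ‖u‖ - a * ‖u‖ ^ 2)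
      ≤ C₀ * ∏ i, Real.exp (-(a / (2 * k)) * (u i) ^ 2) := by
    intro u
    set t := ‖u‖ with hts
    have ht : 0 ≤ t := norm_nonneg _
    have h1 : t + 1 ≤ Real.exp t := Real.add_one_le_exp t
    have h2 : (t + 1) * Real.exp (b * t - a * t ^ 2)
        ≤ Real.exp (t + (b * t - a * t ^ 2)) := by
      rw [Real.exp_add]
      exact mul_le_mul_of_nonneg_right h1 (Real.exp_pos _).le
    have h3 : t + (b * t - a * t ^ 2) ≤ (|b| + 1) ^ 2 / (2 * a) - (a / 2) * t ^ 2 := by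
      have hb : b * t ≤ |b| * t := mul_le_mul_of_nonneg_right (le_abs_self b) ht
      have h4 : (|b| + 1) * t - (a / 2) * t ^ 2 ≤ (|b| + 1) ^ 2 / (2 * a) := by
        rw [← sub_nonneg]
        have h5 : 0 ≤ (a * t - (|b| + 1)) ^ 2 / (2 * a) := by positivity
        have h6 : (a * t - (|b| + 1)) ^ 2 / (2 * a)
            = (|b| + 1) ^ 2 / (2 * a) - ((|b| + 1) * t - (a / 2) * t ^ 2) := by
          field_simp
          ring
        linarith [h6 ▸ h5]
      nlinarith
    have h7 : Real.exp ((|b| + 1) ^ 2 / (2 * a) - (a / 2) * t ^ 2)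
        ≤ C₀ * ∏ i, Real.exp (-(a / (2 * k)) * (u i) ^ 2) := by
      rw [← Real.exp_sum, ← Real.exp_add, Real.exp_le_exp]
      have hs2 : ∑ i, -(a / (2 * (k : ℝ))) * (u i) ^ 2
          = -(a / (2 * (k : ℝ)) * ∑ i, (u i) ^ 2) := by
        rw [Finset.mul_sum, ← Finset.sum_neg_distrib]
        exact Finset.sum_congr rfl fun i _ => by ring
      have hsum : ∑ i, (u i) ^ 2 ≤ (k : ℝ) * t ^ 2 := by
        calc ∑ i, (u i) ^ 2 ≤ ∑ _i : Fin k, t ^ 2 := by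
              refine Finset.sum_le_sum fun i _ => ?_
              have := norm_le_pi_norm u i
              rw [Real.norm_eq_abs] at this
              nlinarith [abs_nonneg (u i), le_abs_self (u i), neg_abs_le (u i)]
          _ = (k : ℝ) * t ^ 2 := by simp [Finset.sum_const, nsmul_eq_mul]
      have : a / (2 * k) * ∑ i, (u i) ^ 2 ≤ a / 2 * t ^ 2 := by
        rcases Nat.eq_zero_or_pos k with hk | hk
        · subst hk
          simp only [Finset.univ_eq_empty, Finset.sum_empty, mul_zero]
          positivity
        · have hk' : (0 : ℝ) < k := by exact_mod_cast hk
          calc a / (2 * k) * ∑ i, (u i) ^ 2 ≤ a / (2 * k) * ((k : ℝ) * t ^ 2) := by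
                refine mul_le_mul_of_nonneg_left hsum (by positivity)
            _ = a / 2 * t ^ 2 := by field_simp
      rw [hs2]
      linarith
    calc (t + 1) * Real.exp (b * t - a * t ^ 2)
        ≤ Real.exp (t + (b * t - a * t ^ 2)) := h2
      _ ≤ Real.exp ((|b| + 1) ^ 2 / (2 * a) - (a / 2) * t ^ 2) := Real.exp_le_exp.2 h3
      _ ≤ _ := h7
  have hgint : Integrable
      (fun u : Fin k → ℝ => C₀ * ∏ i, Real.exp (-(a / (2 * k)) * (u i) ^ 2)) := by
    refine Integrable.const_mul ?_ _
    refine Integrable.fintype_prod (f := fun _ (x : ℝ) => Real.exp (-(a / (2 * k)) * x ^ 2))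
      fun i => ?_
    have hk' : (0 : ℝ) < k := by
      have : 0 < k := Fin.pos i
      exact_mod_cast this
    exact integrable_exp_neg_mul_sq (by positivity)
  refine hgint.mono' ?_ ?_
  · apply Continuous.aestronglyMeasurable
    fun_prop
  · refine Filter.Eventually.of_forall fun u => ?_
    rw [Real.norm_eq_abs, abs_of_nonneg (by positivity)]
    exact key u

/-- Lower bound for the quadratic form of a positive definite matrix. -/
lemma quad_lower (e : Matrix (Fin k) (Fin k) ℝ) (he : e.PosDef) :
    ∃ m : ℝ, 0 < m ∧ ∀ x : Fin k → ℝ, m * (∑ i, (x i) ^ 2) ≤ x ⬝ᵥ (e *ᵥ x) := by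
  obtain ⟨A, hAT, hmul⟩ : ∃ A : Matrix (Fin k) (Fin k) ℝ, Aᵀ = A ∧ A * A = e := by
    open scoped MatrixOrder in
    refine ⟨CFC.sqrt e, ?_, CFC.sqrt_mul_sqrt_self e he.posSemidef.nonneg⟩
    open scoped MatrixOrder in
    have := (CFC.sqrt_nonneg e).posSemidef.isHermitian.eq
    rwa [conjTranspose_eq_transpose_of_trivial] at this
  have hdet : A.det ≠ 0 := by
    intro h
    have : e.det = 0 := by rw [← hmul, det_mul, h, zero_mul]
    exact he.det_pos.ne' this
  set B := A⁻¹ with hB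
  have hBA : ∀ x : Fin k → ℝ, B *ᵥ (A *ᵥ x) = x := by
    intro x
    rw [mulVec_mulVec, nonsing_inv_mul A (isUnit_iff_ne_zero.mpr hdet), one_mulVec]
  have key1 : ∀ x : Fin k → ℝ, x ⬝ᵥ e *ᵥ x = (A *ᵥ x) ⬝ᵥ (A *ᵥ x) := by
    intro x
    rw [← hmul, ← mulVec_mulVec, dotProduct_mulVec]
    congr 1
    rw [← mulVec_transpose, hAT]
  set T := ∑ i, ∑ j, (B i j) ^ 2 with hT
  have hT0 : 0 ≤ T := by positivity
  refine ⟨1 / (T + 1), by positivity, fun x => ?_⟩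
  set w := A *ᵥ x with hw
  have hx : ∀ i, (x i) ^ 2 ≤ (∑ j, (B i j) ^ 2) * ∑ j, (w j) ^ 2 := by
    intro i
    have : x i = ∑ j, B i j * w j := by
      conv_lhs => rw [← hBA x, ← hw]
      simp [Matrix.mulVec, dotProduct]
    rw [this]
    exact Finset.sum_mul_sq_le_sq_mul_sq _ _ _
  have hsum : ∑ i, (x i) ^ 2 ≤ T * ∑ j, (w j) ^ 2 := by
    rw [hT, Finset.sum_mul]
    exact Finset.sum_le_sum fun i _ => hx i
  have hww : w ⬝ᵥ w = ∑ j, (w j) ^ 2 := by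
    simp [dotProduct, sq]
  have hwnn : 0 ≤ ∑ j, (w j) ^ 2 := by positivity
  have hpos : (0:ℝ) < T + 1 := by linarith
  rw [key1 x, ← hw, hww, div_mul_eq_mul_div, one_mul, div_le_iff₀ hpos]
  nlinarith

lemma continuous_mulVec_aux (e : Matrix (Fin k) (Fin k) ℝ) :
    Continuous fun x : Fin k → ℝ => e *ᵥ x := by
  refine continuous_pi fun i => ?_
  simp only [Matrix.mulVec, dotProduct]
  exact continuous_finset_sum _ fun j _ => continuous_const.mul (continuous_apply j)

lemma hasFDerivAt_quad (e : Matrix (Fin k) (Fin k) ℝ) (heT : eᵀ = e) (x : Fin k → ℝ) :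
    HasFDerivAt (fun x : Fin k → ℝ => x ⬝ᵥ e *ᵥ x) ((2 : ℝ) • dotCLM (e *ᵥ x)) x := by
  have hsymm : ∀ i j, e j i = e i j := fun i j => by
    rw [← Matrix.transpose_apply e i j, heT]
  have h1 : HasFDerivAt (fun x : Fin k → ℝ => ∑ i, ∑ j, e i j * (x i * x j))
      (∑ i, ∑ j, e i j • (x i • (ContinuousLinearMap.proj j : (Fin k → ℝ) →L[ℝ] ℝ)
        + x j • (ContinuousLinearMap.proj i : (Fin k → ℝ) →L[ℝ] ℝ))) x := by
    refine HasFDerivAt.fun_sum fun i _ => HasFDerivAt.fun_sum fun j _ => ?_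
    exact ((hasFDerivAt_apply i x).mul (hasFDerivAt_apply j x)).const_mul (e i j)
  have hfun : (fun x : Fin k → ℝ => x ⬝ᵥ e *ᵥ x)
      = fun x : Fin k → ℝ => ∑ i, ∑ j, e i j * (x i * x j) := by
    funext z
    simp only [dotProduct, Matrix.mulVec, Finset.mul_sum]
    exact Finset.sum_congr rfl fun i _ => Finset.sum_congr rfl fun j _ => by ring
  have hclm : (∑ i, ∑ j, e i j • (x i • (ContinuousLinearMap.proj j : (Fin k → ℝ) →L[ℝ] ℝ)
        + x j • (ContinuousLinearMap.proj i : (Fin k → ℝ) →L[ℝ] ℝ)))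
      = (2 : ℝ) • dotCLM (e *ᵥ x) := by
    ext v
    simp only [ContinuousLinearMap.sum_apply, ContinuousLinearMap.add_apply,
      ContinuousLinearMap.smul_apply, ContinuousLinearMap.proj_apply, smul_eq_mul,
      dotCLM_apply, dotProduct, Matrix.mulVec]
    have lhs_eq : ∑ i, ∑ j, e i j * (x i * v j + x j * v i)
        = (∑ i, ∑ j, e i j * x i * v j) + ∑ i, ∑ j, e i j * x j * v i := by
      rw [← Finset.sum_add_distrib]
      refine Finset.sum_congr rfl fun i _ => ?_
      rw [← Finset.sum_add_distrib]
      exact Finset.sum_congr rfl fun j _ => by ring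
    rw [lhs_eq]
    have h2 : (∑ i, ∑ j, e i j * x i * v j) = ∑ i, ∑ j, e i j * x j * v i := by
      rw [Finset.sum_comm]
      refine Finset.sum_congr rfl fun i _ => Finset.sum_congr rfl fun j _ => ?_
      rw [hsymm i j]
    have h3 : (∑ i, ∑ j, e i j * x j * v i)
        = ∑ i, (∑ j, e i j * x j) * v i := by
      exact Finset.sum_congr rfl fun i _ => by rw [Finset.sum_mul]
    rw [h2, h3]
    ring
  rw [hfun]
  rw [← hclm]
  exact h1

lemma shift_integral {W : Type*} [NormedAddCommGroup W] [NormedSpace ℝ W]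
    (g : (Fin k → ℝ) → W) (y : Fin k → ℝ) :
    ∫ u in Set.Iic (0 : Fin k → ℝ), g (y + u) = ∫ x in Set.Iic y, g x := by
  have hmp : MeasurePreserving (fun u : Fin k → ℝ => y + u) volume volume :=
    measurePreserving_add_left volume y
  have hemb : MeasurableEmbedding (fun u : Fin k → ℝ => y + u) :=
    (MeasurableEquiv.addLeft y).measurableEmbedding
  have h := hmp.setIntegral_preimage_emb hemb g (Set.Iic y)
  have hpre : (fun u : Fin k → ℝ => y + u) ⁻¹' Set.Iic y = Set.Iic 0 := by
    ext u
    simp [Set.mem_Iic]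
  rwa [hpre] at h

end Aux

set_option maxHeartbeats 1600000 in
/-- The CDF `Φ_Σ` is differentiable and the first truncated moment of `N(0,Σ)` over
`∏ (-∞, yᵢ]` equals `-Σ ∇Φ_Σ(y)`. -/
theorem truncated_mvn_first_moment {k : ℕ} (S : Matrix (Fin k) (Fin k) ℝ)
    (hS : S.PosDef) :
    Differentiable ℝ (mvnCdf (0 : Fin k → ℝ) S) ∧
    ∀ y : Fin k → ℝ,
      (fun i => ∫ x in Set.Iic y, x i * mvnPdf 0 S x)
        = -(S *ᵥ fun i => fderiv ℝ (mvnCdf (0 : Fin k → ℝ) S) y (Pi.single i 1)) := by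
  classical
  set e := S⁻¹ with he_def
  have hePD : e.PosDef := hS.inv
  have heT : eᵀ = e := by
    have := hePD.isHermitian.eq
    rwa [Matrix.conjTranspose_eq_transpose_of_trivial] at this
  obtain ⟨m, hm, hQ⟩ := quad_lower e hePD
  set c : ℝ := (2 * Real.pi) ^ (-(k : ℝ) / 2) * S.det ^ (-(1 : ℝ) / 2) with hc_def
  have hc : 0 < c :=
    mul_pos (Real.rpow_pos_of_pos (by positivity) _) (Real.rpow_pos_of_pos hS.det_pos _)
  have hfeq : ∀ x : Fin k → ℝ, mvnPdf 0 S x = c * Real.exp (-(1/2) * (x ⬝ᵥ e *ᵥ x)) := by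
    intro x
    simp [mvnPdf, Fintype.card_fin, hc_def, he_def]
  have hfpos : ∀ x, 0 < mvnPdf 0 S x := fun x => by rw [hfeq]; positivity
  have hfle : ∀ x, mvnPdf 0 S x ≤ c * Real.exp (-(m/2) * ‖x‖^2) := by
    intro x
    rw [hfeq]
    refine mul_le_mul_of_nonneg_left (Real.exp_le_exp.2 ?_) hc.le
    have h1 := hQ x
    have h2 := sq_pi_norm_le x
    nlinarith [mul_le_mul_of_nonneg_left h2 hm.le]
  set F' : (Fin k → ℝ) → (Fin k → ℝ) →L[ℝ] ℝ :=
    fun x => (-(mvnPdf 0 S x)) • dotCLM (e *ᵥ x) with hF'def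
  have hfd : ∀ x, HasFDerivAt (mvnPdf 0 S) (F' x) x := by
    intro x
    have h1 := hasFDerivAt_quad e heT x
    have h2 := ((h1.const_mul (-(1/2) : ℝ)).exp).const_mul c
    have hfun : (fun x : Fin k → ℝ => c * Real.exp (-(1/2) * (x ⬝ᵥ e *ᵥ x))) = mvnPdf 0 S := by
      funext z
      rw [hfeq z]
    rw [hfun] at h2
    refine h2.congr_fderiv ?_
    ext v
    simp only [hF'def, ContinuousLinearMap.smul_apply, smul_eq_mul, hfeq x]
    ring
  have hdiff_f : Differentiable ℝ (mvnPdf 0 S) := fun x => (hfd x).differentiableAt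
  have hcont_f : Continuous (mvnPdf 0 S) := hdiff_f.continuous
  have hcont_F' : Continuous F' := by
    refine Continuous.smul hcont_f.neg ?_
    exact continuous_dotCLM.comp (continuous_mulVec_aux e)
  set E0 : ℝ := ∑ i, ∑ j, |e i j| with hE0_def
  have hE0 : 0 ≤ E0 := by positivity
  have hdot_le : ∀ x : Fin k → ℝ, ‖dotCLM (e *ᵥ x)‖ ≤ E0 * ‖x‖ := by
    intro x
    refine (norm_dotCLM_le _).trans ?_
    rw [hE0_def, Finset.sum_mul]
    refine Finset.sum_le_sum fun i _ => ?_
    calc |(e *ᵥ x) i| = |∑ j, e i j * x j| := rfl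
      _ ≤ ∑ j, |e i j * x j| := Finset.abs_sum_le_sum_abs _ _
      _ ≤ ∑ j, |e i j| * ‖x‖ := by
          refine Finset.sum_le_sum fun j _ => ?_
          rw [abs_mul]
          exact mul_le_mul_of_nonneg_left (norm_le_pi_norm x j) (abs_nonneg _)
      _ = (∑ j, |e i j|) * ‖x‖ := by rw [Finset.sum_mul]
  have hF'le : ∀ x, ‖F' x‖ ≤ c * E0 * (‖x‖ * Real.exp (-(m/2) * ‖x‖^2)) := by
    intro x
    have h1 : ‖F' x‖ = mvnPdf 0 S x * ‖dotCLM (e *ᵥ x)‖ := by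
      have h2 := norm_smul (-(mvnPdf 0 S x)) (dotCLM (e *ᵥ x))
      rw [Real.norm_eq_abs, abs_neg, abs_of_pos (hfpos x)] at h2
      exact h2
    rw [h1]
    calc mvnPdf 0 S x * ‖dotCLM (e *ᵥ x)‖
        ≤ (c * Real.exp (-(m/2) * ‖x‖^2)) * (E0 * ‖x‖) :=
          mul_le_mul (hfle x) (hdot_le x) (norm_nonneg _) (by positivity)
      _ = c * E0 * (‖x‖ * Real.exp (-(m/2) * ‖x‖^2)) := by ring
  -- key differentiation step
  have key : ∀ y₀ : Fin k → ℝ,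
      Integrable (fun u => F' (y₀ + u)) (volume.restrict (Set.Iic 0)) ∧
      HasFDerivAt (mvnCdf 0 S) (∫ u in Set.Iic (0 : Fin k → ℝ), F' (y₀ + u)) y₀ := by
    intro y₀
    set R : ℝ := ‖y₀‖ + 1 with hR
    have hR1 : 1 ≤ R := by
      have := norm_nonneg y₀
      rw [hR]; linarith
    have hbd_int : Integrable
        (fun u : Fin k → ℝ => (‖u‖ + 1) * Real.exp ((m * R) * ‖u‖ - (m/2) * ‖u‖^2)) :=
      integrable_aux (m/2) (m * R) (by positivity)
    have hyR : ∀ y ∈ Metric.ball y₀ 1, ‖y‖ ≤ R := by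
      intro y hy
      have h := mem_ball_iff_norm.mp hy
      calc ‖y‖ = ‖y₀ + (y - y₀)‖ := by rw [show y₀ + (y - y₀) = y by abel]
        _ ≤ ‖y₀‖ + ‖y - y₀‖ := norm_add_le _ _
        _ ≤ R := by rw [hR]; linarith
    have hexp : ∀ y ∈ Metric.ball y₀ 1, ∀ u : Fin k → ℝ,
        Real.exp (-(m/2) * ‖y + u‖^2) ≤ Real.exp ((m * R) * ‖u‖ - (m/2) * ‖u‖^2) := by
      intro y hy u
      rw [Real.exp_le_exp]
      have hyR' := hyR y hy
      have h1 : ‖u‖ - R ≤ ‖y + u‖ := by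
        have h2 : ‖u‖ ≤ ‖y + u‖ + ‖y‖ := by
          have : ‖(y + u) - y‖ ≤ ‖y + u‖ + ‖y‖ := norm_sub_le _ _
          rwa [add_sub_cancel_left] at this
        linarith
      have h0 : (0:ℝ) ≤ ‖y + u‖ := norm_nonneg _
      have hu0 : (0:ℝ) ≤ ‖u‖ := norm_nonneg _
      have hsq : ‖u‖^2 - 2 * R * ‖u‖ ≤ ‖y + u‖^2 := by
        rcases le_or_gt ‖u‖ R with h | h
        · nlinarith
        · nlinarith
      nlinarith [mul_le_mul_of_nonneg_left hsq (by positivity : (0:ℝ) ≤ m/2)]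
    set bound : (Fin k → ℝ) → ℝ :=
      fun u => (c * E0 * R) * ((‖u‖ + 1) * Real.exp ((m * R) * ‖u‖ - (m/2) * ‖u‖^2))
      with hbound
    have hF'bd : ∀ y ∈ Metric.ball y₀ 1, ∀ u, ‖F' (y + u)‖ ≤ bound u := by
      intro y hy u
      have hyR' := hyR y hy
      calc ‖F' (y + u)‖ ≤ c * E0 * (‖y + u‖ * Real.exp (-(m/2) * ‖y + u‖^2)) := hF'le _
        _ ≤ c * E0 * ((R * (‖u‖ + 1)) * Real.exp ((m * R) * ‖u‖ - (m/2) * ‖u‖^2)) := by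
            refine mul_le_mul_of_nonneg_left ?_ (by positivity)
            refine mul_le_mul ?_ (hexp y hy u) (Real.exp_pos _).le (by positivity)
            have h1 : ‖y + u‖ ≤ ‖y‖ + ‖u‖ := norm_add_le _ _
            nlinarith [norm_nonneg u, norm_nonneg y]
        _ = bound u := by rw [hbound]; ring
    have hder : ∀ u z : Fin k → ℝ,
        HasFDerivAt (fun y : Fin k → ℝ => mvnPdf 0 S (y + u)) (F' (z + u)) z := by
      intro u z
      have h := (hfd (z + u)).comp z ((hasFDerivAt_id z).add_const u)
      rw [ContinuousLinearMap.comp_id] at h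
      exact h
    have main := hasFDerivAt_integral_of_dominated_loc_of_lip'
      (μ := volume.restrict (Set.Iic (0 : Fin k → ℝ)))
      (F := fun y u => mvnPdf 0 S (y + u)) (F' := fun u => F' (y₀ + u)) (x₀ := y₀)
      (bound := bound) (s := Metric.ball y₀ 1) (Metric.ball_mem_nhds _ one_pos)
      (fun y _ => (hcont_f.comp (continuous_const.add continuous_id)).aestronglyMeasurable.restrict)
      (by
        refine ((hbd_int.const_mul c).restrict (s := Set.Iic 0)).mono'
          ((hcont_f.comp (continuous_const.add continuous_id)).aestronglyMeasurable.restrict)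
          (Filter.Eventually.of_forall fun u => ?_)
        rw [Real.norm_eq_abs, abs_of_pos (hfpos _)]
        calc mvnPdf 0 S (y₀ + u) ≤ c * Real.exp (-(m/2) * ‖y₀ + u‖^2) := hfle _
          _ ≤ c * Real.exp ((m * R) * ‖u‖ - (m/2) * ‖u‖^2) :=
              mul_le_mul_of_nonneg_left (hexp y₀ (Metric.mem_ball_self one_pos) u) hc.le
          _ ≤ c * ((‖u‖ + 1) * Real.exp ((m * R) * ‖u‖ - (m/2) * ‖u‖^2)) := by
              refine mul_le_mul_of_nonneg_left ?_ hc.le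
              nlinarith [mul_nonneg (norm_nonneg u)
                (Real.exp_pos ((m * R) * ‖u‖ - (m/2) * ‖u‖^2)).le])
      ((hcont_F'.comp (continuous_const.add continuous_id)).aestronglyMeasurable.restrict)
      (Filter.Eventually.of_forall fun u y hy =>
        Convex.norm_image_sub_le_of_norm_hasFDerivWithin_le
          (f' := fun z => F' (z + u))
          (fun z hz => (hder u z).hasFDerivWithinAt)
          (fun z hz => hF'bd z hz u) (convex_ball _ _) (Metric.mem_ball_self one_pos) hy)
      ((hbd_int.const_mul (c * E0 * R)).restrict (s := Set.Iic 0))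
      (Filter.Eventually.of_forall fun u => hder u y₀)
    obtain ⟨hint, hderiv⟩ := main
    refine ⟨hint, ?_⟩
    have hcdf : mvnCdf 0 S = fun y => ∫ u in Set.Iic (0 : Fin k → ℝ), mvnPdf 0 S (y + u) := by
      funext y
      rw [mvnCdf]
      exact (shift_integral (mvnPdf 0 S) y).symm
    rw [hcdf]
    exact hderiv
  refine ⟨fun y => ((key y).2).differentiableAt, fun y => ?_⟩
  have hfd_eq : fderiv ℝ (mvnCdf 0 S) y = ∫ u in Set.Iic (0 : Fin k → ℝ), F' (y + u) :=
    (key y).2.fderiv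
  have hD : ∀ i, fderiv ℝ (mvnCdf 0 S) y (Pi.single i 1)
      = ∫ x in Set.Iic y, (-(mvnPdf 0 S x)) * (e *ᵥ x) i := by
    intro i
    rw [hfd_eq, ContinuousLinearMap.integral_apply (key y).1]
    have hpt : ∀ u, (F' (y + u)) (Pi.single i 1)
        = (fun x => (-(mvnPdf 0 S x)) * (e *ᵥ x) i) (y + u) := by
      intro u
      simp [hF'def, dotCLM_apply, dotProduct_single]
    simp_rw [hpt]
    exact shift_integral (fun x => (-(mvnPdf 0 S x)) * (e *ᵥ x) i) y
  have hEi_le : ∀ (i : Fin k) (x : Fin k → ℝ), |(e *ᵥ x) i| ≤ E0 * ‖x‖ := by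
    intro i x
    calc |(e *ᵥ x) i| = |∑ j, e i j * x j| := rfl
      _ ≤ ∑ j, |e i j * x j| := Finset.abs_sum_le_sum_abs _ _
      _ ≤ ∑ j, |e i j| * ‖x‖ := by
          refine Finset.sum_le_sum fun j _ => ?_
          rw [abs_mul]
          exact mul_le_mul_of_nonneg_left (norm_le_pi_norm x j) (abs_nonneg _)
      _ = (∑ j, |e i j|) * ‖x‖ := by rw [Finset.sum_mul]
      _ ≤ E0 * ‖x‖ := by
          refine mul_le_mul_of_nonneg_right ?_ (norm_nonneg _)
          rw [hE0_def]
          exact Finset.single_le_sum (f := fun i => ∑ j, |e i j|)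
            (fun i _ => by positivity) (Finset.mem_univ i)
  have hint_i : ∀ i, IntegrableOn (fun x => mvnPdf 0 S x * (e *ᵥ x) i) (Set.Iic y) volume := by
    intro i
    refine (((integrable_aux (m/2) 0 (by positivity)).const_mul
      (c * E0)).restrict (s := Set.Iic y)).mono' ?_ ?_
    · refine Continuous.aestronglyMeasurable ?_ |>.restrict
      exact hcont_f.mul ((continuous_apply i).comp (continuous_mulVec_aux e))
    · refine Filter.Eventually.of_forall fun x => ?_
      rw [Real.norm_eq_abs, abs_mul, abs_of_pos (hfpos x)]
      calc mvnPdf 0 S x * |(e *ᵥ x) i|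
          ≤ (c * Real.exp (-(m/2) * ‖x‖^2)) * (E0 * ‖x‖) :=
            mul_le_mul (hfle x) (hEi_le i x) (abs_nonneg _) (by positivity)
        _ ≤ c * E0 * ((‖x‖ + 1) * Real.exp (0 * ‖x‖ - (m/2) * ‖x‖^2)) := by
            rw [zero_mul, zero_sub]
            have : Real.exp (-((m/2) * ‖x‖^2)) = Real.exp (-(m/2) * ‖x‖^2) := by ring_nf
            rw [this]
            nlinarith [mul_nonneg (mul_nonneg hc.le hE0)
              (Real.exp_pos (-(m/2) * ‖x‖^2)).le]
  have hSe : ∀ x : Fin k → ℝ, S *ᵥ (e *ᵥ x) = x := by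
    intro x
    rw [Matrix.mulVec_mulVec, Matrix.mul_nonsing_inv S (isUnit_iff_ne_zero.mpr hS.det_pos.ne'),
      Matrix.one_mulVec]
  funext j
  have hpt : (fun x : Fin k → ℝ => x j * mvnPdf 0 S x)
      = fun x => ∑ i, S j i * (mvnPdf 0 S x * (e *ᵥ x) i) := by
    funext x
    have h1 : ∑ i, S j i * (mvnPdf 0 S x * (e *ᵥ x) i)
        = mvnPdf 0 S x * ∑ i, S j i * (e *ᵥ x) i := by
      rw [Finset.mul_sum]
      exact Finset.sum_congr rfl fun i _ => by ring
    have h2 : ∑ i, S j i * (e *ᵥ x) i = (S *ᵥ (e *ᵥ x)) j := by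
      simp [Matrix.mulVec, dotProduct]
    rw [h1, h2, hSe x]
    ring
  show (∫ x in Set.Iic y, x j * mvnPdf 0 S x) = _
  rw [hpt]
  rw [integral_finset_sum _ (fun i _ => ((hint_i i).const_mul _))]
  have hfin : ∀ i, ∫ x in Set.Iic y, S j i * (mvnPdf 0 S x * (e *ᵥ x) i)
      = -(S j i * fderiv ℝ (mvnCdf 0 S) y (Pi.single i 1)) := by
    intro i
    rw [integral_const_mul, hD i]
    have : (∫ x in Set.Iic y, (-(mvnPdf 0 S x)) * (e *ᵥ x) i)
        = -∫ x in Set.Iic y, mvnPdf 0 S x * (e *ᵥ x) i := by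
      rw [← integral_neg]
      exact integral_congr_ae (Filter.Eventually.of_forall fun x => by ring)
    rw [this]
    ring
  simp_rw [hfin]
  rw [Finset.sum_neg_distrib, Pi.neg_apply]
  simp [Matrix.mulVec, dotProduct]
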